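/- Let μ be a σ-finite measure on a measurable space X, let ℓ : X → ℝ be measurable with ℓ(x) > 0 for μ-a.e. x and Z := ∫ ℓ dμ ∈ (0, ∞), and let π be the probability measure with density ℓ/Z with respect to μ. For k = 1, …, K̂ let f_{k1}, …, f_{kM̂} : X → ℝ be nonnegative measurable functions, and for v ∈ ℝ^{K̂} and w₁, …, w_{K̂} ∈ ℝ^{M̂} with nonnegative entries define g_{v,w}(x) := ∏_{k=1}^{K̂} (∑_{i=1}^{M̂} w_{ki} f_{ki}(x))^{v_k}. Let W be any set of tuples (v, w₁, …, w_{K̂}) such that for every element of W: ∑_i w_{ki} f_{ki}(x) > 0 for μ-a.e. x and each k, ∫ g_{v,w} dμ ∈ (0, ∞), and log ℓ and ∑_k v_k log(∑_i w_{ki} f_{ki}) are π-integrable; let q_{v,w} be the probability measure with density g_{v,w} / ∫ g_{v,w} dμ with respect to μ. Define J(v, w) := ∫ ∑_{k=1}^{K̂} v_k log(∑_{i=1}^{M̂} w_{ki} f_{ki}) dπ − log ∫ exp(∑_{k=1}^{K̂} v_k log(∑_{i=1}^{M̂} w_{ki} f_{ki}) − log ℓ) dπ. Then KL(π ‖ q_{v,w})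 = ∫ log ℓ dπ − J(v, w) on W; consequently a tuple in W minimizes the KL divergence over W if and only if it maximizes J over W. In particular this holds for W equal to the admissible tuples with ∑_{k=1}^{K̂} v_k = K* and ∑_{i=1}^{M̂} w_{ki} = 1 for each k. -/

import Mathlib

open MeasureTheory Real

/-- The Kullback–Leibler divergence `KL(p ‖ q) = ∫ log (dp/dq) dp`. -/
noncomputable def klDiv {X : Type*} [MeasurableSpace X] (p q : Measure X) : ℝ :=
  ∫ x, Real.log ((p.rnDeriv q) x).toReal ∂p

/-- multi-level objective. With posterior `p` of density
`ℓ/Z` w.r.t. `μ`, group-parameter likelihoods `f k i ≥ 0`, weighted likelihood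
`gvw (v, w) x = ∏ k, (∑ i, w k i * f k i x) ^ v k` and reconstructed posterior
`q (v, w)`, for every admissible tuple `(v, w) ∈ W` we have
`KL(p ‖ q (v, w)) = ∫ log ℓ dp − J (v, w)`, where
`J (v, w) = ∫ ∑ k, v k * log (∑ i, w k i * f k i) dp −
  log ∫ exp (∑ k, v k * log (∑ i, w k i * f k i) − log ℓ) dp`;
hence a tuple in `W` minimizes the KL divergence over `W` iff it maximizes `J`
over `W`. -/
theorem multi_level_objective
    {X : Type*} [MeasurableSpace X] (μ : Measure X) [SigmaFinite μ]
    (ℓ : X → ℝ) (hℓ_meas : Measurable ℓ) (hℓ_pos : ∀ᵐ x ∂μ, 0 < ℓ x)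
    (hℓ_int : Integrable ℓ μ) (hZ_pos : 0 < ∫ x, ℓ x ∂μ)
    (p : Measure X)
    (hp : p = μ.withDensity (fun x => ENNReal.ofReal (ℓ x / ∫ x, ℓ x ∂μ)))
    (Khat Mhat : ℕ) (f : Fin Khat → Fin Mhat → X → ℝ)
    (hf_meas : ∀ k i, Measurable (f k i)) (hf_nonneg : ∀ k i x, 0 ≤ f k i x)
    (gvw : ((Fin Khat → ℝ) × (Fin Khat → Fin Mhat → ℝ)) → X → ℝ)
    (hgvw : ∀ v w x, gvw (v, w) x =
      ∏ k : Fin Khat, (∑ i : Fin Mhat, w k i * f k i x) ^ v k)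
    (W : Set ((Fin Khat → ℝ) × (Fin Khat → Fin Mhat → ℝ)))
    (hW_nonneg : ∀ vw ∈ W, ∀ k i, 0 ≤ vw.2 k i)
    (hW_pos_ae : ∀ vw ∈ W, ∀ k, ∀ᵐ x ∂μ, 0 < ∑ i : Fin Mhat, vw.2 k i * f k i x)
    (hW_int : ∀ vw ∈ W, Integrable (gvw vw) μ)
    (hW_pos : ∀ vw ∈ W, 0 < ∫ x, gvw vw x ∂μ)
    (hlogℓ_int : Integrable (fun x => Real.log (ℓ x)) p)
    (hW_log_int : ∀ vw ∈ W, Integrable (fun x =>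
      ∑ k : Fin Khat, vw.1 k *
        Real.log (∑ i : Fin Mhat, vw.2 k i * f k i x)) p)
    (q : ((Fin Khat → ℝ) × (Fin Khat → Fin Mhat → ℝ)) → Measure X)
    (hq : ∀ vw, q vw =
      μ.withDensity (fun x => ENNReal.ofReal (gvw vw x / ∫ x, gvw vw x ∂μ)))
    (J : ((Fin Khat → ℝ) × (Fin Khat → Fin Mhat → ℝ)) → ℝ)
    (hJ : ∀ vw, J vw =
      (∫ x, ∑ k : Fin Khat, vw.1 k *
          Real.log (∑ i : Fin Mhat, vw.2 k i * f k i x) ∂p) -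
        Real.log (∫ x, Real.exp ((∑ k : Fin Khat, vw.1 k *
          Real.log (∑ i : Fin Mhat, vw.2 k i * f k i x)) -
            Real.log (ℓ x)) ∂p)) :
    (∀ vw ∈ W, klDiv p (q vw) = (∫ x, Real.log (ℓ x) ∂p) - J vw) ∧
      (∀ vwstar ∈ W,
        IsMinOn (fun vw => klDiv p (q vw)) W vwstar ↔ IsMaxOn J W vwstar) := by
  set Z : ℝ := ∫ x, ℓ x ∂μ with hZdef
  have hZ0 : Z ≠ 0 := ne_of_gt hZ_pos
  have hp_ac : p ≪ μ := hp ▸ withDensity_absolutelyContinuous _ _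
  -- p is a probability measure
  haveI hprob : IsProbabilityMeasure p := by
    constructor
    rw [hp, withDensity_apply _ MeasurableSet.univ, setLIntegral_univ,
      ← ofReal_integral_eq_lintegral_ofReal (hℓ_int.div_const Z)
        (hℓ_pos.mono fun x hx => (div_pos hx hZ_pos).le)]
    rw [integral_div, div_self hZ0]
    simp
  have key : ∀ vw ∈ W, klDiv p (q vw) = (∫ x, Real.log (ℓ x) ∂p) - J vw := by
    rintro ⟨v, w⟩ hvw
    set S : Fin Khat → X → ℝ := fun k x => ∑ i : Fin Mhat, w k i * f k i x with hSdef
    have hS_meas : ∀ k, Measurable (S k) := fun k =>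
      Finset.measurable_sum _ (fun i _ => (hf_meas k i).const_mul _)
    set g : X → ℝ := gvw (v, w) with hgdef
    have hg_eq : ∀ x, g x = ∏ k : Fin Khat, (S k x) ^ v k := hgvw v w
    have hg_meas : Measurable g := by
      have : g = fun x => ∏ k : Fin Khat, (S k x) ^ v k := funext hg_eq
      rw [this]
      exact Finset.measurable_prod _ fun k _ => (hS_meas k).pow measurable_const
    have hSpos : ∀ᵐ x ∂μ, ∀ k, 0 < S k x :=
      (ae_all_iff).2 (fun k => hW_pos_ae (v, w) hvw k)
    have hg_pos : ∀ᵐ x ∂μ, 0 < g x := by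
      filter_upwards [hSpos] with x hx
      rw [hg_eq]
      exact Finset.prod_pos fun k _ => Real.rpow_pos_of_pos (hx k) _
    have hg_nonneg : ∀ x, 0 ≤ g x := fun x => by
      rw [hg_eq]
      exact Finset.prod_nonneg fun k _ => Real.rpow_nonneg
        (Finset.sum_nonneg fun i _ => mul_nonneg (hW_nonneg _ hvw k i) (hf_nonneg k i x)) _
    set Zg : ℝ := ∫ x, g x ∂μ with hZgdef
    have hZg_pos : 0 < Zg := hW_pos _ hvw
    have hZg0 : Zg ≠ 0 := ne_of_gt hZg_pos
    -- q is a finite measure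
    have hq_eq : q (v, w) = μ.withDensity (fun x => ENNReal.ofReal (g x / Zg)) := hq (v, w)
    haveI hqfin : IsFiniteMeasure (q (v, w)) := by
      constructor
      rw [hq_eq, withDensity_apply _ MeasurableSet.univ, setLIntegral_univ,
        ← ofReal_integral_eq_lintegral_ofReal ((hW_int _ hvw).div_const Zg)
          (ae_of_all _ fun x => div_nonneg (hg_nonneg x) hZg_pos.le)]
      exact ENNReal.ofReal_lt_top
    set dP : X → ENNReal := fun x => ENNReal.ofReal (ℓ x / Z) with hdPdef
    set dQ : X → ENNReal := fun x => ENNReal.ofReal (g x / Zg) with hdQdef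
    have hdP_meas : Measurable dP := (hℓ_meas.div_const Z).ennreal_ofReal
    have hdQ_meas : Measurable dQ := (hg_meas.div_const Zg).ennreal_ofReal
    set h : X → ENNReal := fun x => dP x / dQ x with hhdef
    have hh_meas : Measurable h := hdP_meas.div hdQ_meas
    have hpq : p = (q (v, w)).withDensity h := by
      rw [hq_eq, ← withDensity_mul μ hdQ_meas hh_meas, hp]
      refine (withDensity_congr_ae ?_).symm
      filter_upwards [hg_pos] with x hx
      have hdq_ne : dQ x ≠ 0 := by
        simp only [hdQdef, ne_eq, ENNReal.ofReal_eq_zero, not_le]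
        exact div_pos hx hZg_pos
      simpa using ENNReal.mul_div_cancel hdq_ne ENNReal.ofReal_ne_top
    have hp_ac_q : p ≪ q (v, w) := hpq ▸ withDensity_absolutelyContinuous _ _
    have hrn : p.rnDeriv (q (v, w)) =ᵐ[p] h := by
      have h1 : p.rnDeriv (q (v, w)) =ᵐ[q (v, w)] h := by
        rw [hpq]
        exact Measure.rnDeriv_withDensity _ hh_meas
      exact h1.filter_mono hp_ac_q.ae_le
    set L : X → ℝ := fun x => ∑ k : Fin Khat, v k * Real.log (S k x) with hLdef
    have hL_int : Integrable L p := hW_log_int _ hvw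
    -- log g = L a.e.
    have hlogg : ∀ x, (∀ k, 0 < S k x) → Real.log (g x) = L x := by
      intro x hx
      rw [hg_eq, Real.log_prod (fun k _ => (Real.rpow_pos_of_pos (hx k) _).ne')]
      exact Finset.sum_congr rfl fun k _ => Real.log_rpow (hx k) _
    -- pointwise value of the log rnDeriv
    have hlog_ae : (fun x => Real.log ((p.rnDeriv (q (v, w))) x).toReal)
        =ᵐ[p] fun x => Real.log (ℓ x) - L x + (Real.log Zg - Real.log Z) := by
      filter_upwards [hrn, hℓ_pos.filter_mono hp_ac.ae_le, hSpos.filter_mono hp_ac.ae_le,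
        hg_pos.filter_mono hp_ac.ae_le] with x hx hℓx hSx hgx
      rw [hx]
      have h1 : (h x).toReal = (ℓ x / Z) / (g x / Zg) := by
        rw [hhdef]
        simp only [ENNReal.toReal_div, hdPdef, hdQdef,
          ENNReal.toReal_ofReal (div_nonneg hℓx.le hZ_pos.le),
          ENNReal.toReal_ofReal (div_nonneg hgx.le hZg_pos.le)]
      rw [h1, Real.log_div (div_pos hℓx hZ_pos).ne' (div_pos hgx hZg_pos).ne',
        Real.log_div hℓx.ne' hZ0, Real.log_div hgx.ne' hZg0, hlogg x hSx]
      ring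
    -- compute the normalizing integral in J
    have hexp : (∫ x, Real.exp (L x - Real.log (ℓ x)) ∂p) = Zg / Z := by
      rw [hp]
      have hrw : dP = fun x => (((ℓ x / Z).toNNReal : NNReal) : ENNReal) := rfl
      rw [hrw, integral_withDensity_eq_integral_smul (hℓ_meas.div_const Z).real_toNNReal]
      have hcong : (fun x => (ℓ x / Z).toNNReal • Real.exp (L x - Real.log (ℓ x)))
          =ᵐ[μ] fun x => g x / Z := by
        filter_upwards [hℓ_pos, hSpos] with x h1 h2
        have hexpL : Real.exp (L x) = g x := by
          rw [hLdef, Real.exp_sum, hg_eq]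
          exact Finset.prod_congr rfl fun k _ => by
            rw [mul_comm, ← Real.rpow_def_of_pos (h2 k)]
        simp only [NNReal.smul_def, Real.coe_toNNReal _ (div_nonneg h1.le hZ_pos.le),
          smul_eq_mul]
        rw [Real.exp_sub, Real.exp_log h1, hexpL]
        field_simp
      rw [integral_congr_ae hcong, integral_div]
    -- put things together
    have hkl : klDiv p (q (v, w)) =
        (∫ x, Real.log (ℓ x) ∂p) - (∫ x, L x ∂p) + (Real.log Zg - Real.log Z) := by
      have hint1 : Integrable (fun x => Real.log (ℓ x) - L x) p := hlogℓ_int.sub hL_int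
      rw [klDiv, integral_congr_ae hlog_ae,
        integral_add hint1 (integrable_const _),
        integral_sub hlogℓ_int hL_int, integral_const]
      simp
    have hJval : J (v, w) = (∫ x, L x ∂p) - (Real.log Zg - Real.log Z) := by
      rw [hJ (v, w)]
      have : (∫ x, Real.exp ((∑ k : Fin Khat, v k *
          Real.log (∑ i : Fin Mhat, w k i * f k i x)) - Real.log (ℓ x)) ∂p) = Zg / Z := hexp
      rw [this, Real.log_div hZg0 hZ0]
    rw [hkl, hJval]
    ring
  refine ⟨key, fun vws hvws => ?_⟩
  constructor
  · intro hmin y hy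
    have h1 := hmin hy
    simp only [Set.mem_setOf_eq] at h1 ⊢
    rw [key _ hvws, key _ hy] at h1
    linarith
  · intro hmax y hy
    have h1 := hmax hy
    simp only [Set.mem_setOf_eq] at h1 ⊢
    rw [key _ hvws, key _ hy]
    linarith
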